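/- arXiv:2411.01346 — 2 statements merged into one kernel-verified Lean document; each statement's English description precedes it below -/
import Mathlib

section
/- Let Ω ⊆ ℝⁿ and z̄ ∈ Ω. If the regular (Clarke) tangent cone T̂_Ω(z̄) equals the paratingent cone T^P_Ω(z̄), then this common set is a linear subspace of ℝⁿ. Consequently, Ω is strictly smooth at z̄ if and only if T̂_Ω(z̄) = T^P_Ω(z̄) = T_Ω(z̄) and this set is a linear subspace. -/
open Filter Topology Metric Set
open scoped RealInnerProductSpace NNReal ENNReal

noncomputable section

/-- Euclidean space `ℝⁿ`. -/
abbrev Euc (n : ℕ) : Type := EuclideanSpace ℝ (Fin n)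

section NormedDefs

variable {X Y : Type*} [NormedAddCommGroup X] [NormedSpace ℝ X]
  [NormedAddCommGroup Y] [NormedSpace ℝ Y]

/-- The (Bouligand) tangent cone to `Ω` at `z`. -/
def tanCone (Ω : Set X) (z : X) : Set X :=
  {w | ∃ (t : ℕ → ℝ) (wk : ℕ → X), (∀ k, 0 < t k) ∧ Tendsto t atTop (𝓝 0) ∧
      Tendsto wk atTop (𝓝 w) ∧ ∀ k, z + t k • wk k ∈ Ω}

/-- The regular (Clarke) tangent cone to `Ω` at `z`. -/
def clarkeCone (Ω : Set X) (z : X) : Set X :=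
  {w | ∀ (zk : ℕ → X) (t : ℕ → ℝ), (∀ k, zk k ∈ Ω) → Tendsto zk atTop (𝓝 z) →
      (∀ k, 0 < t k) → Tendsto t atTop (𝓝 0) →
      ∃ wk : ℕ → X, Tendsto wk atTop (𝓝 w) ∧ ∀ k, zk k + t k • wk k ∈ Ω}

/-- The paratingent cone to `Ω` at `z`. -/
def paraCone (Ω : Set X) (z : X) : Set X :=
  {w | ∃ (zk : ℕ → X) (t : ℕ → ℝ) (wk : ℕ → X), (∀ k, zk k ∈ Ω) ∧
      Tendsto zk atTop (𝓝 z) ∧ (∀ k, 0 < t k) ∧ Tendsto t atTop (𝓝 0) ∧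
      Tendsto wk atTop (𝓝 w) ∧ ∀ k, zk k + t k • wk k ∈ Ω}

/-- `Ω` is strictly smooth at `z` if the Clarke tangent cone and the paratingent
cone coincide there. -/
def StrictlySmoothAt (Ω : Set X) (z : X) : Prop := clarkeCone Ω z = paraCone Ω z

/-- `Ω` is geometrically derivable at `z`. -/
def GeomDerivableAt (Ω : Set X) (z : X) : Prop :=
  ∀ w ∈ tanCone Ω z, ∀ t : ℕ → ℝ, (∀ k, 0 < t k) → Tendsto t atTop (𝓝 0) →
    ∃ wk : ℕ → X, Tendsto wk atTop (𝓝 w) ∧ ∀ k, z + t k • wk k ∈ Ω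

/-- `Ω` is locally closed at `z`. -/
def LocallyClosedAt (Ω : Set X) (z : X) : Prop :=
  ∃ V : Set X, V ∈ 𝓝 z ∧ IsClosed V ∧ IsClosed (Ω ∩ V)

/-- The set `s` is a linear subspace. -/
def IsLinearSubspace (s : Set X) : Prop := ∃ S : Submodule ℝ X, (S : Set X) = s

/-- The set `s` is a linear subspace of dimension `d`. -/
def HasDim (s : Set X) (d : ℕ) : Prop :=
  ∃ S : Submodule ℝ X, (S : Set X) = s ∧ Module.finrank ℝ S = d

/-- The graph of a set-valued mapping. -/
def gphOf (Fm : X → Set Y) : Set (X × Y) := {p | p.2 ∈ Fm p.1}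

/-- The graph of a single-valued mapping defined on `U`. -/
def gphOn (f : X → Y) (U : Set X) : Set (X × Y) := {p | p.1 ∈ U ∧ p.2 = f p.1}

/-- `f` (defined on `U`) is strictly continuous (locally Lipschitz) at `xb`. -/
def StrictlyContinuousAt' (f : X → Y) (U : Set X) (xb : X) : Prop :=
  ∃ U' ∈ 𝓝 xb, U' ⊆ U ∧ ∃ κ : ℝ, 0 ≤ κ ∧
    ∀ x ∈ U', ∀ x' ∈ U', ‖f x - f x'‖ ≤ κ * ‖x - x'‖

/-- `f` (defined on `U`) is calm at `xb`. -/
def CalmAt' (f : X → Y) (U : Set X) (xb : X) : Prop :=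
  ∃ U' ∈ 𝓝 xb, U' ⊆ U ∧ ∃ κ : ℝ, 0 ≤ κ ∧ ∀ x ∈ U', ‖f x - f xb‖ ≤ κ * ‖x - xb‖

/-- `f` (defined on `U`) is strictly differentiable at `xb`. -/
def StrictDiffOnAt (f : X → Y) (U : Set X) (xb : X) : Prop :=
  ∃ A : X →L[ℝ] Y, ∀ ε : ℝ, 0 < ε → ∃ δ > 0, ∀ x ∈ U, ∀ x' ∈ U,
    ‖x - xb‖ < δ → ‖x' - xb‖ < δ → ‖f x' - f x - A (x' - x)‖ ≤ ε * ‖x' - x‖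

/-- `f` (defined on `U`) is Fréchet differentiable at `xb`. -/
def FrechetDiffOnAt (f : X → Y) (U : Set X) (xb : X) : Prop :=
  ∃ A : X →L[ℝ] Y, ∀ ε : ℝ, 0 < ε → ∃ δ > 0, ∀ x ∈ U,
    ‖x - xb‖ < δ → ‖f x - f xb - A (x - xb)‖ ≤ ε * ‖x - xb‖

/-- The B-Jacobian (Bouligand limiting Jacobian) of `f` at `xb`. -/
def BJacobian (f : X → Y) (U : Set X) (xb : X) : Set (X →L[ℝ] Y) :=
  {A | ∃ (xk : ℕ → X) (Ak : ℕ → X →L[ℝ] Y),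
      (∀ k, xk k ∈ U ∧ HasFDerivAt f (Ak k) (xk k)) ∧
      Tendsto xk atTop (𝓝 xb) ∧ Tendsto Ak atTop (𝓝 A)}

/-- `Ω ⊆ X` is a Lipschitz manifold of dimension `d` (and codimension `c`) around `z`:
up to a `C¹` change of coordinates `Φ`, `Ω` locally coincides with the graph of a
Lipschitz mapping `f : U → ℝᶜ`, `U ⊆ ℝᵈ` open. -/
def IsLipschitzManifoldAt (Ω : Set X) (d c : ℕ) (z : X) : Prop :=
  ∃ (W : Set X) (Φ : X → Euc d × Euc c) (Ψ : Euc d × Euc c → X)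
    (U : Set (Euc d)) (f : Euc d → Euc c) (K : ℝ≥0),
    IsOpen W ∧ z ∈ W ∧ IsOpen (Φ '' W) ∧
    ContDiffOn ℝ 1 Φ W ∧ ContDiffOn ℝ 1 Ψ (Φ '' W) ∧
    (∀ x ∈ W, Ψ (Φ x) = x) ∧ (∀ y ∈ Φ '' W, Φ (Ψ y) = y) ∧
    IsOpen U ∧ LipschitzOnWith K f U ∧
    Φ '' (Ω ∩ W) = {p | p.1 ∈ U ∧ p.2 = f p.1}

/-- As `IsLipschitzManifoldAt`, with the Lipschitz mapping `f` moreover strictly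
differentiable at the transformed reference point. -/
def IsGraphStrictDiffAt (Ω : Set X) (d c : ℕ) (z : X) : Prop :=
  ∃ (W : Set X) (Φ : X → Euc d × Euc c) (Ψ : Euc d × Euc c → X)
    (U : Set (Euc d)) (f : Euc d → Euc c) (K : ℝ≥0),
    IsOpen W ∧ z ∈ W ∧ IsOpen (Φ '' W) ∧
    ContDiffOn ℝ 1 Φ W ∧ ContDiffOn ℝ 1 Ψ (Φ '' W) ∧
    (∀ x ∈ W, Ψ (Φ x) = x) ∧ (∀ y ∈ Φ '' W, Φ (Ψ y) = y) ∧
    IsOpen U ∧ LipschitzOnWith K f U ∧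
    Φ '' (Ω ∩ W) = {p | p.1 ∈ U ∧ p.2 = f p.1} ∧
    StrictDiffOnAt f U (Φ z).1

/-- Strong metric subregularity of a set-valued mapping at `(xb, yb)`. -/
def StronglySubregAt (Fm : X → Set Y) (xb : X) (yb : Y) : Prop :=
  ∃ κ : ℝ≥0, ∃ U ∈ 𝓝 xb, ∀ x ∈ U,
    (‖x - xb‖₊ : ℝ≥0∞) ≤ (κ : ℝ≥0∞) * EMetric.infEdist yb (Fm x)

/-- Metric regularity of a set-valued mapping around `(xb, yb)`. -/
def MetricallyRegularAround (Fm : X → Set Y) (xb : X) (yb : Y) : Prop :=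
  ∃ κ : ℝ≥0, ∃ U ∈ 𝓝 xb, ∃ V ∈ 𝓝 yb, ∀ x ∈ U, ∀ y ∈ V,
    EMetric.infEdist x {x' | y ∈ Fm x'} ≤ (κ : ℝ≥0∞) * EMetric.infEdist y (Fm x)

/-- Strong metric regularity of a set-valued mapping around `(xb, yb)`. -/
def StronglyRegularAround (Fm : X → Set Y) (xb : X) (yb : Y) : Prop :=
  MetricallyRegularAround Fm xb yb ∧
  ∃ (U' : Set X) (V' : Set Y) (h : Y → X), IsOpen U' ∧ IsOpen V' ∧
    xb ∈ U' ∧ yb ∈ V' ∧ h yb = xb ∧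
    gphOf Fm ∩ (U' ×ˢ V') = {p | p.2 ∈ V' ∧ p.1 = h p.2}

end NormedDefs

section InnerDefs

variable {E F : Type*} [NormedAddCommGroup E] [InnerProductSpace ℝ E]
  [NormedAddCommGroup F] [InnerProductSpace ℝ F]

/-- The regular (Fréchet) normal cone: the polar of the tangent cone. -/
def regNormal (Ω : Set E) (z : E) : Set E := {v | ∀ w ∈ tanCone Ω z, ⟪v, w⟫ ≤ 0}

/-- The limiting (Mordukhovich) normal cone. -/
def limNormal (Ω : Set E) (z : E) : Set E :=
  {v | ∃ zk vk : ℕ → E, (∀ k, zk k ∈ Ω) ∧ Tendsto zk atTop (𝓝 z) ∧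
      (∀ k, vk k ∈ regNormal Ω (zk k)) ∧ Tendsto vk atTop (𝓝 v)}

/-- `Ω` is normally regular at `z`. -/
def NormallyRegularAt (Ω : Set E) (z : E) : Prop := regNormal Ω z = limNormal Ω z

/-- The orthogonal complement (as a set) of a set. -/
def orthSet (s : Set E) : Set E := {v | ∀ w ∈ s, ⟪v, w⟫ = 0}

/-- `Ω` is semismooth* at `zb`. -/
def SemismoothStarAt (Ω : Set E) (zb : E) : Prop :=
  ∀ ε : ℝ, 0 < ε → ∃ δ > 0, ∀ z ∈ Ω, ‖z - zb‖ < δ → ∀ v ∈ limNormal Ω z,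
    |⟪v, z - zb⟫| ≤ ε * ‖z - zb‖ * ‖v‖

/-- The canonical inner product of the product of two inner product spaces. -/
def inner2 (p q : E × F) : ℝ := ⟪p.1, q.1⟫ + ⟪p.2, q.2⟫

/-- The regular normal cone for subsets of a product space. -/
def regNormal2 (Ω : Set (E × F)) (z : E × F) : Set (E × F) :=
  {v | ∀ w ∈ tanCone Ω z, inner2 v w ≤ 0}

/-- The limiting normal cone for subsets of a product space. -/
def limNormal2 (Ω : Set (E × F)) (z : E × F) : Set (E × F) :=
  {v | ∃ zk vk : ℕ → E × F, (∀ k, zk k ∈ Ω) ∧ Tendsto zk atTop (𝓝 z) ∧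
      (∀ k, vk k ∈ regNormal2 Ω (zk k)) ∧ Tendsto vk atTop (𝓝 v)}

/-- Normal regularity for subsets of a product space. -/
def NormallyRegular2At (Ω : Set (E × F)) (z : E × F) : Prop :=
  regNormal2 Ω z = limNormal2 Ω z

/-- Orthogonal complement (as a set) in a product space. -/
def orthSet2 (s : Set (E × F)) : Set (E × F) := {v | ∀ w ∈ s, inner2 v w = 0}

/-- The graph of the limiting coderivative of a mapping with graph `Γ` at `z`:
`{(y*, x*) : (x*, -y*) ∈ N_Γ(z)}`. -/
def coderivGraph (Γ : Set (E × F)) (z : E × F) : Set (F × E) :=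
  {q | (q.2, -q.1) ∈ limNormal2 Γ z}

/-- The semismooth* property for subsets of a product space (i.e. for mappings). -/
def SemismoothStar2At (Ω : Set (E × F)) (zb : E × F) : Prop :=
  ∀ ε : ℝ, 0 < ε → ∃ δ > 0, ∀ z ∈ Ω, ‖z - zb‖ < δ → ∀ v ∈ limNormal2 Ω z,
    |inner2 v (z - zb)| ≤ ε * ‖z - zb‖ * ‖v‖

/-- The regular subdifferential of an extended-real-valued function. -/
def regSubdiff (φ : E → EReal) (xb : E) : Set E :=
  {v | φ xb ≠ ⊤ ∧ φ xb ≠ ⊥ ∧ ∀ ε : ℝ, 0 < ε → ∃ δ > 0, ∀ x, ‖x - xb‖ < δ →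
      φ xb + ((⟪v, x - xb⟫ - ε * ‖x - xb‖ : ℝ) : EReal) ≤ φ x}

/-- The limiting (Mordukhovich) subdifferential. -/
def limSubdiff (φ : E → EReal) (xb : E) : Set E :=
  {v | ∃ xk vk : ℕ → E, Tendsto xk atTop (𝓝 xb) ∧
      Tendsto (fun k => φ (xk k)) atTop (𝓝 (φ xb)) ∧
      (∀ k, vk k ∈ regSubdiff φ (xk k)) ∧ Tendsto vk atTop (𝓝 v)}

/-- `φ` is prox-regular at `xb` for `vb` with parameters `r ≥ 0` and `ε > 0`. -/
def ProxRegular (φ : E → EReal) (xb vb : E) (r ε : ℝ) : Prop :=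
  ∀ x' x v, ‖x' - xb‖ < ε → v ∈ limSubdiff φ x → ‖x - xb‖ < ε → ‖v - vb‖ < ε →
    φ x < φ xb + (ε : EReal) →
    φ x + ((⟪v, x' - x⟫ - r / 2 * ‖x' - x‖ ^ 2 : ℝ) : EReal) ≤ φ x'

/-- The graph of the `φ`-attentive `ε`-localization of `∂φ` around `(xb, vb)`. -/
def attLocGraph (φ : E → EReal) (xb vb : E) (ε : ℝ) : Set (E × E) :=
  {p | p.2 ∈ limSubdiff φ p.1 ∧ ‖p.1 - xb‖ < ε ∧ ‖p.2 - vb‖ < ε ∧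
      φ p.1 < φ xb + (ε : EReal)}

end InnerDefs

/-- The map `ℝⁿ → ℝᵈ × ℝᶜ` obtained from a permutation (re-indexing) of the
coordinates followed by splitting them into the first `d` and the last `c` ones. -/
def permSplit {n d c : ℕ} (e : Fin n ≃ (Fin d ⊕ Fin c)) (z : Euc n) : Euc d × Euc c :=
  (show Euc d from WithLp.toLp 2 (fun i => z (e.symm (Sum.inl i))),
   show Euc c from WithLp.toLp 2 (fun j => z (e.symm (Sum.inr j))))
section AuxLemmas

variable {X : Type*} [NormedAddCommGroup X] [NormedSpace ℝ X]

lemma zero_mem_clarke (Ω : Set X) (z : X) : (0 : X) ∈ clarkeCone Ω z := by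
  intro zk t hzk hz ht ht0
  exact ⟨fun _ => 0, tendsto_const_nhds, fun k => by simpa using hzk k⟩

lemma add_mem_clarke {Ω : Set X} {z w1 w2 : X}
    (h1 : w1 ∈ clarkeCone Ω z) (h2 : w2 ∈ clarkeCone Ω z) :
    w1 + w2 ∈ clarkeCone Ω z := by
  intro zk t hzk hz ht ht0
  obtain ⟨wk1, hwk1, hmem1⟩ := h1 zk t hzk hz ht ht0
  have hsm : Tendsto (fun k => t k • wk1 k) atTop (𝓝 ((0:ℝ) • w1)) := ht0.smul hwk1
  have hz' : Tendsto (fun k => zk k + t k • wk1 k) atTop (𝓝 z) := by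
    have h2 := hz.add (show Tendsto (fun k => t k • wk1 k) atTop (𝓝 (0:X)) by
      simpa using hsm)
    rw [add_zero] at h2; exact h2
  obtain ⟨wk2, hwk2, hmem2⟩ := h2 (fun k => zk k + t k • wk1 k) t hmem1 hz' ht ht0
  refine ⟨fun k => wk1 k + wk2 k, hwk1.add hwk2, fun k => ?_⟩
  simpa [smul_add, add_assoc] using hmem2 k

lemma smul_mem_clarke {Ω : Set X} {z w : X} {c : ℝ} (hc : 0 < c)
    (h : w ∈ clarkeCone Ω z) : c • w ∈ clarkeCone Ω z := by
  intro zk t hzk hz ht ht0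
  obtain ⟨wk, hwk, hmem⟩ := h zk (fun k => t k * c) hzk hz
    (fun k => mul_pos (ht k) hc) (by simpa using ht0.mul_const c)
  refine ⟨fun k => c • wk k, hwk.const_smul c, fun k => ?_⟩
  simpa [smul_smul, mul_comm] using hmem k

lemma clarke_subset_tan {Ω : Set X} {z : X} (hz : z ∈ Ω) :
    clarkeCone Ω z ⊆ tanCone Ω z := by
  intro w hw
  have ht0 : Tendsto (fun k : ℕ => (1:ℝ)/(k+1)) atTop (𝓝 0) :=
    tendsto_one_div_add_atTop_nhds_zero_nat
  obtain ⟨wk, hwk, hmem⟩ := hw (fun _ => z) (fun k => 1/(k+1)) (fun _ => hz)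
    tendsto_const_nhds (fun k => by positivity) ht0
  exact ⟨_, wk, fun k => by positivity, ht0, hwk, hmem⟩

lemma tan_subset_para {Ω : Set X} {z : X} (hz : z ∈ Ω) :
    tanCone Ω z ⊆ paraCone Ω z := by
  rintro w ⟨t, wk, ht, ht0, hwk, hmem⟩
  exact ⟨fun _ => z, t, wk, fun _ => hz, tendsto_const_nhds, ht, ht0, hwk, hmem⟩

lemma neg_mem_para {Ω : Set X} {z w : X} (h : w ∈ paraCone Ω z) :
    -w ∈ paraCone Ω z := by
  obtain ⟨zk, t, wk, hzk, hz, ht, ht0, hwk, hmem⟩ := h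
  have hsm : Tendsto (fun k => t k • wk k) atTop (𝓝 ((0:ℝ) • w)) := ht0.smul hwk
  refine ⟨fun k => zk k + t k • wk k, t, fun k => -wk k, hmem, ?_, ht, ht0,
    hwk.neg, fun k => by simpa [smul_neg, add_assoc] using hzk k⟩
  have h2 := hz.add (show Tendsto (fun k => t k • wk k) atTop (𝓝 (0:X)) by
    simpa using hsm)
  rw [add_zero] at h2; exact h2

end AuxLemmas

/-- If the Clarke tangent cone equals the paratingent cone at a point
of the set, then this common set is a linear subspace; consequently, `Ω` is strictly
smooth at `zb` iff `T̂ = T^P = T` and this set is a linear subspace. -/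
theorem stmt_0 {n : ℕ} (Ω : Set (Euc n)) (zb : Euc n) (hz : zb ∈ Ω) :
    (clarkeCone Ω zb = paraCone Ω zb → IsLinearSubspace (clarkeCone Ω zb)) ∧
    (StrictlySmoothAt Ω zb ↔
      (clarkeCone Ω zb = paraCone Ω zb ∧ paraCone Ω zb = tanCone Ω zb ∧
        IsLinearSubspace (clarkeCone Ω zb))) := by
  have main : clarkeCone Ω zb = paraCone Ω zb → IsLinearSubspace (clarkeCone Ω zb) := by
    intro h
    refine ⟨{ carrier := clarkeCone Ω zb
              add_mem' := fun ha hb => add_mem_clarke ha hb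
              zero_mem' := zero_mem_clarke Ω zb
              smul_mem' := ?_ }, rfl⟩
    intro c w hw
    rcases lt_trichotomy c 0 with hc | hc | hc
    · have hwn : -w ∈ clarkeCone Ω zb := by
        rw [h]; exact neg_mem_para (h ▸ hw)
      have := smul_mem_clarke (neg_pos.mpr hc) hwn
      simpa using this
    · simpa [hc] using zero_mem_clarke Ω zb
    · exact smul_mem_clarke hc hw
  refine ⟨main, ?_, ?_⟩
  · intro h
    have h' : clarkeCone Ω zb = paraCone Ω zb := h
    refine ⟨h', Subset.antisymm ?_ (tan_subset_para hz), main h'⟩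
    rw [← h']; exact clarke_subset_tan hz
  · rintro ⟨h1, _, _⟩
    exact h1
end
end

section
/- Assume that the set Ω ⊆ ℝⁿ is locally closed at z̄ ∈ Ω. Then Ω is strictly smooth at z̄ if and only if both T^P_Ω(z̄) and N_Ω(z̄) are linear subspaces satisfying T^P_Ω(z̄)^⊥ = N_Ω(z̄). Moreover, if Ω is strictly smooth at z̄ then Ω is normally regular at z̄. -/
open Filter Topology Metric Set
open scoped RealInnerProductSpace NNReal ENNReal

noncomputable section

section AuxProofs

variable {n : ℕ}

lemma tendsto_tsmul_zero {t : ℕ → ℝ} {wk : ℕ → Euc n} {w : Euc n}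
    (ht : Tendsto t atTop (𝓝 0)) (hw : Tendsto wk atTop (𝓝 w)) :
    Tendsto (fun k => t k • wk k) atTop (𝓝 0) := by
  have := ht.smul hw
  simpa using this

lemma neg_mem_paraCone {Ω : Set (Euc n)} {z w : Euc n} (h : w ∈ paraCone Ω z) :
    -w ∈ paraCone Ω z := by
  obtain ⟨zk, t, wk, hzk, hzt, htp, ht0, hwk, hmem⟩ := h
  refine ⟨fun k => zk k + t k • wk k, t, fun k => -wk k, hmem, ?_, htp, ht0, hwk.neg, ?_⟩
  · simpa using hzt.add (tendsto_tsmul_zero ht0 hwk)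
  · intro k
    have : zk k + t k • wk k + t k • -wk k = zk k := by
      rw [smul_neg]; abel
    rw [this]; exact hzk k

lemma tanCone_subset_paraCone {Ω : Set (Euc n)} {z : Euc n} (hz : z ∈ Ω) :
    tanCone Ω z ⊆ paraCone Ω z := by
  rintro w ⟨t, wk, htp, ht0, hwk, hmem⟩
  exact ⟨fun _ => z, t, wk, fun _ => hz, tendsto_const_nhds, htp, ht0, hwk, hmem⟩

lemma one_div_add_pos : ∀ k : ℕ, (0:ℝ) < 1 / ((k:ℝ) + 1) := fun k => by positivity

lemma clarkeCone_subset_tanCone {Ω : Set (Euc n)} {z : Euc n} (hz : z ∈ Ω) :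
    clarkeCone Ω z ⊆ tanCone Ω z := by
  intro w hw
  obtain ⟨wk, hwk, hmem⟩ := hw (fun _ => z) (fun k : ℕ => 1 / (k + 1)) (fun _ => hz)
    tendsto_const_nhds one_div_add_pos tendsto_one_div_add_atTop_nhds_zero_nat
  exact ⟨_, wk, one_div_add_pos, tendsto_one_div_add_atTop_nhds_zero_nat, hwk, hmem⟩

lemma zero_mem_clarkeCone (Ω : Set (Euc n)) (z : Euc n) : (0 : Euc n) ∈ clarkeCone Ω z := by
  intro zk t hzk _ _ _
  exact ⟨fun _ => 0, tendsto_const_nhds, fun k => by simpa using hzk k⟩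

lemma add_mem_clarkeCone {Ω : Set (Euc n)} {z w1 w2 : Euc n}
    (h1 : w1 ∈ clarkeCone Ω z) (h2 : w2 ∈ clarkeCone Ω z) : w1 + w2 ∈ clarkeCone Ω z := by
  intro zk t hzk hz ht ht0
  obtain ⟨wa, hwa, hma⟩ := h1 zk t hzk hz ht ht0
  obtain ⟨wb, hwb, hmb⟩ := h2 (fun k => zk k + t k • wa k) t hma
    (by simpa using hz.add (tendsto_tsmul_zero ht0 hwa)) ht ht0
  exact ⟨fun k => wa k + wb k, hwa.add hwb, fun k => by
    have := hmb k
    rw [smul_add, ← add_assoc]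
    exact this⟩

lemma smul_mem_clarkeCone {Ω : Set (Euc n)} {z w : Euc n} {c : ℝ} (hc : 0 < c)
    (h : w ∈ clarkeCone Ω z) : c • w ∈ clarkeCone Ω z := by
  intro zk t hzk hz ht ht0
  obtain ⟨wk, hwk, hmem⟩ := h zk (fun k => c * t k) hzk hz (fun k => mul_pos hc (ht k))
    (by simpa using ht0.const_mul c)
  refine ⟨fun k => c • wk k, hwk.const_smul c, fun k => ?_⟩
  have : t k • c • wk k = (c * t k) • wk k := by
    rw [smul_smul, mul_comm]
  rw [this]; exact hmem k

end AuxProofs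
section AuxProofs2

variable {n : ℕ}

lemma smul_mem_regNormal {Ω : Set (Euc n)} {z v : Euc n} {c : ℝ} (hc : 0 ≤ c)
    (hv : v ∈ regNormal Ω z) : c • v ∈ regNormal Ω z := by
  intro w hw
  rw [real_inner_smul_left]
  exact mul_nonpos_of_nonneg_of_nonpos hc (hv w hw)

lemma regNormal_frechet {Ω : Set (Euc n)} {z v : Euc n} (hv : v ∈ regNormal Ω z)
    {ε : ℝ} (hε : 0 < ε) :
    ∃ δ > 0, ∀ z' ∈ Ω, ‖z' - z‖ < δ → ⟪v, z' - z⟫ ≤ ε * ‖z' - z‖ := by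
  by_contra hcon
  push_neg at hcon
  choose z' hz'Ω hz'δ hz'in using fun j : ℕ => hcon (1 / ((j:ℝ) + 1)) (one_div_add_pos j)
  set tj : ℕ → ℝ := fun j => ‖z' j - z‖ with htjdef
  have htjpos : ∀ j, 0 < tj j := by
    intro j
    rcases (norm_nonneg (z' j - z)).lt_or_eq with h | h
    · exact h
    · exfalso
      have hz0 : z' j - z = 0 := norm_eq_zero.mp h.symm
      have h2 := hz'in j
      rw [hz0] at h2
      simp at h2
  set wj : ℕ → Euc n := fun j => (tj j)⁻¹ • (z' j - z) with hwjdef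
  have hwsph : ∀ j, wj j ∈ sphere (0 : Euc n) 1 := by
    intro j
    rw [mem_sphere_zero_iff_norm, hwjdef]
    rw [norm_smul, Real.norm_eq_abs, abs_inv, abs_of_pos (htjpos j)]
    exact inv_mul_cancel₀ (htjpos j).ne'
  obtain ⟨wb, hwbs, ψ, hψ, hconv⟩ := (isCompact_sphere (0 : Euc n) 1).tendsto_subseq hwsph
  have htj0 : Tendsto tj atTop (𝓝 0) :=
    squeeze_zero (fun j => (htjpos j).le) (fun j => (hz'δ j).le)
      tendsto_one_div_add_atTop_nhds_zero_nat
  have hwtan : wb ∈ tanCone Ω z := by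
    refine ⟨tj ∘ ψ, wj ∘ ψ, fun j => htjpos _, htj0.comp hψ.tendsto_atTop, hconv, ?_⟩
    intro j
    have : z + (tj ∘ ψ) j • (wj ∘ ψ) j = z' (ψ j) := by
      simp only [Function.comp_apply, hwjdef, smul_inv_smul₀ (htjpos (ψ j)).ne']
      abel
    rw [this]; exact hz'Ω _
  have hle := hv wb hwtan
  have hlow : ∀ j, ε ≤ ⟪v, (wj ∘ ψ) j⟫ := by
    intro j
    have h1 := hz'in (ψ j)
    have h2 : ⟪v, wj (ψ j)⟫ = (tj (ψ j))⁻¹ * ⟪v, z' (ψ j) - z⟫ := by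
      rw [hwjdef, real_inner_smul_right]
    rw [Function.comp_apply, h2]
    have h3 : (tj (ψ j))⁻¹ * (ε * ‖z' (ψ j) - z‖) = ε := by
      have hne : ‖z' (ψ j) - z‖ ≠ 0 := (htjpos (ψ j)).ne'
      field_simp
      exact div_self hne
    calc ε = (tj (ψ j))⁻¹ * (ε * ‖z' (ψ j) - z‖) := h3.symm
    _ ≤ (tj (ψ j))⁻¹ * ⟪v, z' (ψ j) - z⟫ := by
        apply mul_le_mul_of_nonneg_left (le_of_lt (hz'in (ψ j))) (inv_nonneg.mpr (htjpos _).le)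
  have hlim : Tendsto (fun j => ⟪v, (wj ∘ ψ) j⟫) atTop (𝓝 ⟪v, wb⟫) :=
    (tendsto_const_nhds : Tendsto (fun _ : ℕ => v) atTop (𝓝 v)).inner hconv
  have : ε ≤ ⟪v, wb⟫ := le_of_tendsto_of_tendsto tendsto_const_nhds hlim
    (Filter.Eventually.of_forall hlow)
  linarith

end AuxProofs2
section AuxProofs3

variable {n : ℕ}

lemma limNormal_inner_le {Ω : Set (Euc n)} {zb v w : Euc n}
    (hv : v ∈ limNormal Ω zb) (hw : w ∈ clarkeCone Ω zb) : ⟪v, w⟫ ≤ 0 := by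
  obtain ⟨zk, vk, hzkΩ, hzk, hvkN, hvk⟩ := hv
  have hδ : ∀ k : ℕ, ∃ δ > 0, ∀ z' ∈ Ω, ‖z' - zk k‖ < δ →
      ⟪vk k, z' - zk k⟫ ≤ (1 / ((k:ℝ) + 1)) * ‖z' - zk k‖ :=
    fun k => regNormal_frechet (hvkN k) (one_div_add_pos k)
  choose δ hδpos hδle using hδ
  set t : ℕ → ℝ := fun k => min (δ k / (‖w‖ + 1)) (1 / ((k:ℝ) + 1)) with htdef
  have htpos : ∀ k, 0 < t k := fun k =>
    lt_min (div_pos (hδpos k) (by positivity)) (one_div_add_pos k)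
  have ht0 : Tendsto t atTop (𝓝 0) :=
    squeeze_zero (fun k => (htpos k).le) (fun k => min_le_right _ _)
      tendsto_one_div_add_atTop_nhds_zero_nat
  obtain ⟨wk, hwk, hmem⟩ := hw zk t hzkΩ hzk htpos ht0
  have hev : ∀ᶠ k in atTop, ‖wk k‖ < ‖w‖ + 1 := by
    have : Tendsto (fun k => ‖wk k‖) atTop (𝓝 ‖w‖) := hwk.norm
    exact this.eventually (eventually_lt_nhds (by linarith [norm_nonneg w]))
  have hkey : ∀ᶠ k in atTop, ⟪vk k, wk k⟫ ≤ (1 / ((k:ℝ) + 1)) * ‖wk k‖ := by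
    filter_upwards [hev] with k hk
    have h1 : ‖(zk k + t k • wk k) - zk k‖ < δ k := by
      rw [add_sub_cancel_left, norm_smul, Real.norm_eq_abs, abs_of_pos (htpos k)]
      calc t k * ‖wk k‖ ≤ (δ k / (‖w‖ + 1)) * ‖wk k‖ :=
            mul_le_mul_of_nonneg_right (min_le_left _ _) (norm_nonneg _)
      _ < (δ k / (‖w‖ + 1)) * (‖w‖ + 1) := by
            apply mul_lt_mul_of_pos_left hk (div_pos (hδpos k) (by positivity))
      _ = δ k := by field_simp
    have h2 := hδle k _ (hmem k) h1
    rw [add_sub_cancel_left, real_inner_smul_right, norm_smul, Real.norm_eq_abs,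
      abs_of_pos (htpos k)] at h2
    have h3 : t k * ⟪vk k, wk k⟫ ≤ t k * ((1 / ((k:ℝ) + 1)) * ‖wk k‖) := by
      calc t k * ⟪vk k, wk k⟫ ≤ 1 / ((k:ℝ) + 1) * (t k * ‖wk k‖) := h2
      _ = t k * ((1 / ((k:ℝ) + 1)) * ‖wk k‖) := by ring
    exact le_of_mul_le_mul_left h3 (htpos k)
  have hlim1 : Tendsto (fun k => ⟪vk k, wk k⟫) atTop (𝓝 ⟪v, w⟫) := hvk.inner hwk
  have hlim2 : Tendsto (fun k : ℕ => (1 / ((k:ℝ) + 1)) * ‖wk k‖) atTop (𝓝 0) := by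
    have h := Tendsto.mul tendsto_one_div_add_atTop_nhds_zero_nat hwk.norm
    rw [zero_mul] at h
    exact h
  exact le_of_tendsto_of_tendsto hlim1 hlim2 hkey

lemma prox_normal_mem_regNormal {Ω : Set (Euc n)} {zb : Euc n} {ρ : ℝ}
    {x p : Euc n} (hpball : dist p zb < ρ)
    (hnear : ∀ q ∈ Ω ∩ closedBall zb ρ, dist x p ≤ dist x q) :
    x - p ∈ regNormal Ω p := by
  intro u hu
  obtain ⟨τ, uk, hτp, hτ0, huk, hmem⟩ := hu
  have hten : Tendsto (fun k => p + τ k • uk k) atTop (𝓝 p) := by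
    simpa using (tendsto_const_nhds.add (tendsto_tsmul_zero hτ0 huk))
  have hev : ∀ᶠ k in atTop, p + τ k • uk k ∈ closedBall zb ρ :=
    hten (closedBall_mem_nhds_of_mem (by rwa [mem_ball]))
  have hkey : ∀ᶠ k in atTop, ⟪x - p, uk k⟫ ≤ τ k / 2 * ‖uk k‖ ^ 2 := by
    filter_upwards [hev] with k hk
    have h1 : dist x p ≤ dist x (p + τ k • uk k) := hnear _ ⟨hmem k, hk⟩
    rw [dist_eq_norm, dist_eq_norm] at h1
    have h2 : x - (p + τ k • uk k) = (x - p) - τ k • uk k := by abel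
    rw [h2] at h1
    have h3 : ‖x - p‖ ^ 2 ≤ ‖(x - p) - τ k • uk k‖ ^ 2 :=
      pow_le_pow_left₀ (norm_nonneg _) h1 2
    have hexp : ‖(x - p) - τ k • uk k‖ ^ 2
        = ‖x - p‖ ^ 2 - 2 * (τ k * ⟪x - p, uk k⟫) + (τ k * ‖uk k‖) ^ 2 := by
      rw [norm_sub_sq_real, real_inner_smul_right, norm_smul, Real.norm_eq_abs,
        abs_of_pos (hτp k)]
    have hτk := hτp k
    nlinarith [h3, hexp]
  have hlim1 : Tendsto (fun k => ⟪x - p, uk k⟫) atTop (𝓝 ⟪x - p, u⟫) :=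
    (tendsto_const_nhds : Tendsto (fun _ : ℕ => x - p) atTop (𝓝 (x - p))).inner huk
  have hlim2 : Tendsto (fun k => τ k / 2 * ‖uk k‖ ^ 2) atTop (𝓝 0) := by
    have := (hτ0.div_const 2).mul ((huk.norm.pow 2))
    simpa using this
  exact le_of_tendsto_of_tendsto hlim1 hlim2 hkey

lemma isLinearSubspace_orthSet (s : Set (Euc n)) : IsLinearSubspace (orthSet s) := by
  refine ⟨{ carrier := orthSet s, add_mem' := ?_, zero_mem' := ?_, smul_mem' := ?_ }, rfl⟩
  · intro a b ha hb w hw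
    rw [inner_add_left, ha w hw, hb w hw, add_zero]
  · intro w hw
    exact inner_zero_left w
  · intro c a ha w hw
    rw [real_inner_smul_left, ha w hw, mul_zero]

end AuxProofs3
section AuxProofs4

variable {n : ℕ}

set_option maxHeartbeats 1000000 in
lemma exists_prox_dir {C : Set (Euc n)} (hC : IsClosed C) (hCne : C.Nonempty)
    {z0 : Euc n} (hz0 : z0 ∈ C) {w : Euc n} {tf ε : ℝ} (htf : 0 < tf) (hε : 0 < ε)
    (hfar : ε * tf ≤ infDist (z0 + tf • w) C) :
    ∃ s ∈ Set.Ioc (0:ℝ) tf, ∃ p ∈ C,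
      dist (z0 + s • w) p = infDist (z0 + s • w) C ∧
      0 < dist (z0 + s • w) p ∧
      (ε / 2) * dist (z0 + s • w) p ≤ ⟪z0 + s • w - p, w⟫ := by
  rcases eq_or_ne w 0 with rfl | hw0
  · exfalso
    have h0 : infDist (z0 + tf • (0 : Euc n)) C = 0 := by
      simpa using infDist_zero_of_mem hz0
    rw [h0] at hfar
    nlinarith
  have hwpos : 0 < ‖w‖ := norm_pos_iff.mpr hw0
  by_contra hcon
  push_neg at hcon
  set g : ℝ → ℝ := fun s => infDist (z0 + s • w) C with hgdef
  have hgcont : Continuous g :=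
    (continuous_infDist_pt C).comp (continuous_const.add (continuous_id.smul continuous_const))
  have hg0 : g 0 = 0 := by
    show infDist (z0 + (0:ℝ) • w) C = 0
    simpa using infDist_zero_of_mem hz0
  have hbound : ∀ η : ℝ, 0 < η → g tf ≤ (ε / 2 + η) * tf + η := by
    intro η hη
    set A : Set ℝ := {s | s ∈ Set.Icc 0 tf ∧ g s ≤ (ε / 2 + η) * s + η} with hAdef
    have hA0 : (0:ℝ) ∈ A := ⟨⟨le_refl 0, htf.le⟩, by rw [hg0]; positivity⟩
    have hAclosed : IsClosed A := by
      have hrw : A = Set.Icc 0 tf ∩ {s | g s ≤ (ε / 2 + η) * s + η} := rfl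
      rw [hrw]
      exact isClosed_Icc.inter (isClosed_le hgcont
        ((continuous_const.mul continuous_id).add continuous_const))
    have hAbdd : BddAbove A := ⟨tf, fun s hs => hs.1.2⟩
    have hAne : A.Nonempty := ⟨0, hA0⟩
    set T := sSup A with hTdef
    have hTA : T ∈ A := hAclosed.csSup_mem hAne hAbdd
    have hTle : T ≤ tf := hTA.1.2
    have hT0 : 0 ≤ T := hTA.1.1
    have hTf : T = tf := by
      by_contra hne
      have hT : T < tf := hTle.lt_of_ne hne
      rcases (infDist_nonneg : 0 ≤ g T).lt_or_eq with hgT | hgT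
      · -- 0 < g T
        have hgT2 : 0 < g T := hgT
        obtain ⟨p, hpC, hpd⟩ := hC.exists_infDist_eq_dist hCne (z0 + T • w)
        have hd : dist (z0 + T • w) p = g T := hpd.symm
        have hTpos : 0 < T := by
          rcases hT0.lt_or_eq with h | h
          · exact h
          · exfalso
            rw [← h] at hgT2
            rw [hg0] at hgT2
            exact lt_irrefl 0 hgT2
        have hiw : ⟪z0 + T • w - p, w⟫ < ε / 2 * dist (z0 + T • w) p :=
          hcon T ⟨hTpos, hTle⟩ p hpC hd (by rw [hd]; exact hgT)
        set v := z0 + T • w - p with hvdef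
        have hv : ‖v‖ = g T := by rw [hvdef, ← hd, dist_eq_norm]
        set h := min (tf - T) (2 * g T * η / ‖w‖ ^ 2) with hhdef
        have hh : 0 < h := lt_min (by linarith) (by positivity)
        have hhle : h * ‖w‖ ^ 2 ≤ 2 * g T * η := by
          have := min_le_right (tf - T) (2 * g T * η / ‖w‖ ^ 2)
          rw [← hhdef] at this
          calc h * ‖w‖ ^ 2 ≤ (2 * g T * η / ‖w‖ ^ 2) * ‖w‖ ^ 2 :=
                mul_le_mul_of_nonneg_right this (by positivity)
          _ = 2 * g T * η := by field_simp
        have hkey : g (T + h) ≤ ‖v + h • w‖ := by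
          have h1 : dist (z0 + (T + h) • w) p = ‖v + h • w‖ := by
            rw [dist_eq_norm]
            congr 1
            rw [hvdef, add_smul]
            abel
          rw [← h1]
          exact infDist_le_dist_of_mem hpC
        have hsq : ‖v + h • w‖ ^ 2 = ‖v‖ ^ 2 + 2 * (h * ⟪v, w⟫) + (h * ‖w‖) ^ 2 := by
          rw [norm_add_sq_real, real_inner_smul_right, norm_smul, Real.norm_eq_abs,
            abs_of_pos hh]
        have hb0 : (0:ℝ) ≤ ‖v‖ + h * (ε / 2 + η) := by positivity
        have e1 : h * (h * ‖w‖ ^ 2) ≤ h * (2 * g T * η) :=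
          mul_le_mul_of_nonneg_left hhle hh.le
        have e2 : h * ⟪v, w⟫ ≤ h * (ε / 2 * ‖v‖) := by
          have hiw2 : ⟪v, w⟫ ≤ ε / 2 * ‖v‖ := by
            rw [hv, ← hd]; exact hiw.le
          exact mul_le_mul_of_nonneg_left hiw2 hh.le
        have hsq2 : ‖v + h • w‖ ^ 2 ≤ (‖v‖ + h * (ε / 2 + η)) ^ 2 := by
          nlinarith [hsq, e1, e2, hv, sq_nonneg (h * (ε / 2 + η)), hh.le, hη.le]
        have hnlt : ‖v + h • w‖ ≤ ‖v‖ + h * (ε / 2 + η) :=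
          (pow_le_pow_iff_left₀ (norm_nonneg _) hb0 (by norm_num)).mp hsq2
        have hT'A : T + h ∈ A := by
          constructor
          · constructor
            · linarith
            · have := min_le_left (tf - T) (2 * g T * η / ‖w‖ ^ 2)
              rw [← hhdef] at this
              linarith
          · have : g (T + h) ≤ g T + h * (ε / 2 + η) := by
              rw [← hv]; linarith [hkey, hnlt]
            calc g (T + h) ≤ g T + h * (ε / 2 + η) := this
            _ ≤ ((ε / 2 + η) * T + η) + h * (ε / 2 + η) := by linarith [hTA.2]
            _ = (ε / 2 + η) * (T + h) + η := by ring
        have := le_csSup hAbdd hT'A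
        rw [← hTdef] at this
        linarith
      · -- g T = 0
        have hgT2 : g T = 0 := hgT.symm
        set h := min (tf - T) (η / ‖w‖) with hhdef
        have hh : 0 < h := lt_min (by linarith) (by positivity)
        have hT'A : T + h ∈ A := by
          constructor
          · constructor
            · linarith
            · have := min_le_left (tf - T) (η / ‖w‖)
              rw [← hhdef] at this
              linarith
          · have h1 : g (T + h) ≤ g T + dist (z0 + (T + h) • w) (z0 + T • w) :=
              infDist_le_infDist_add_dist
            have h2 : dist (z0 + (T + h) • w) (z0 + T • w) = h * ‖w‖ := by
              rw [dist_eq_norm]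
              have : z0 + (T + h) • w - (z0 + T • w) = h • w := by
                rw [add_smul]; abel
              rw [this, norm_smul, Real.norm_eq_abs, abs_of_pos hh]
            have h3 : h * ‖w‖ ≤ η := by
              have := min_le_right (tf - T) (η / ‖w‖)
              rw [← hhdef] at this
              calc h * ‖w‖ ≤ (η / ‖w‖) * ‖w‖ := mul_le_mul_of_nonneg_right this hwpos.le
              _ = η := by field_simp
            have : g (T + h) ≤ η := by rw [hgT2] at h1; linarith
            have hpos : 0 ≤ (ε / 2 + η) * (T + h) := by positivity
            linarith
        have := le_csSup hAbdd hT'A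
        rw [← hTdef] at this
        linarith
    rw [← hTf]
    exact hTA.2
  have hfin : g tf ≤ ε / 2 * tf := by
    refine le_of_forall_pos_le_add fun c hc => ?_
    have hη : 0 < c / (tf + 1) := by positivity
    have hb := hbound _ hη
    have hc' : (ε / 2 + c / (tf + 1)) * tf + c / (tf + 1) = ε / 2 * tf + c := by
      field_simp
      ring
    linarith
  have hge : ε * tf ≤ g tf := hfar
  have := mul_pos hε htf
  nlinarith

end AuxProofs4
section AuxProofs5

variable {n : ℕ}

set_option maxHeartbeats 1600000 in
lemma polar_limNormal_subset_clarke {Ω : Set (Euc n)} {zb : Euc n} (hz : zb ∈ Ω)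
    (hloc : LocallyClosedAt Ω zb) {w : Euc n}
    (hw : ∀ v ∈ limNormal Ω zb, ⟪v, w⟫ ≤ 0) : w ∈ clarkeCone Ω zb := by
  rcases eq_or_ne w 0 with rfl | hw0
  · exact zero_mem_clarkeCone Ω zb
  obtain ⟨V, hV, hVc, hΩV⟩ := hloc
  obtain ⟨ρ, hρ, hball⟩ := Metric.nhds_basis_closedBall.mem_iff.mp hV
  set C : Set (Euc n) := Ω ∩ closedBall zb ρ with hCdef
  have hC : IsClosed C := by
    have hrw : C = (Ω ∩ V) ∩ closedBall zb ρ := by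
      ext x
      constructor
      · rintro ⟨h1, h2⟩; exact ⟨⟨h1, hball h2⟩, h2⟩
      · rintro ⟨⟨h1, _⟩, h2⟩; exact ⟨h1, h2⟩
    rw [hrw]
    exact hΩV.inter Metric.isClosed_closedBall
  have hCne : C.Nonempty := ⟨zb, hz, mem_closedBall_self hρ.le⟩
  intro zk t hzkΩ hzk htp ht0
  -- the key distance estimate
  have main : Tendsto (fun k => infDist (zk k + t k • w) C / t k) atTop (𝓝 0) := by
    by_contra hcon
    have hnonneg : ∀ k, 0 ≤ infDist (zk k + t k • w) C / t k :=
      fun k => div_nonneg infDist_nonneg (htp k).le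
    obtain ⟨ε, hε, hfreq⟩ : ∃ ε > 0, ∃ᶠ k in atTop,
        ε ≤ infDist (zk k + t k • w) C / t k := by
      by_contra h
      push_neg at h
      apply hcon
      refine Metric.tendsto_atTop.mpr fun ε hε => ?_
      have h2 := (h ε hε)
      obtain ⟨N, hN⟩ := eventually_atTop.mp h2
      refine ⟨N, fun k hk => ?_⟩
      rw [Real.dist_eq, sub_zero, abs_of_nonneg (hnonneg k)]
      exact hN k hk
    obtain ⟨φ, hφ, hφspec⟩ := Filter.extraction_of_frequently_atTop hfreq
    set Z : ℕ → Euc n := fun j => zk (φ j) with hZdef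
    set T : ℕ → ℝ := fun j => t (φ j) with hTdef
    have hTpos : ∀ j, 0 < T j := fun j => htp _
    have hZΩ : ∀ j, Z j ∈ Ω := fun j => hzkΩ _
    have hZt : Tendsto Z atTop (𝓝 zb) := hzk.comp hφ.tendsto_atTop
    have hTt : Tendsto T atTop (𝓝 0) := ht0.comp hφ.tendsto_atTop
    have hfar : ∀ j, ε * T j ≤ infDist (Z j + T j • w) C :=
      fun j => (le_div_iff₀ (hTpos j)).mp (hφspec j)
    have hZsub : Tendsto (fun j => ‖Z j - zb‖) atTop (𝓝 0) := by
      rw [← tendsto_iff_norm_sub_tendsto_zero] at *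
      exact hZt
    have hcomb : Tendsto (fun j => 2 * T j * ‖w‖ + ‖Z j - zb‖) atTop (𝓝 0) := by
      have h1 := ((hTt.const_mul 2).mul_const ‖w‖).add hZsub
      simpa using h1
    have hev : ∀ᶠ j in atTop, ‖Z j - zb‖ ≤ ρ ∧ 2 * T j * ‖w‖ + ‖Z j - zb‖ < ρ := by
      have e1 : ∀ᶠ j in atTop, ‖Z j - zb‖ < ρ := hZsub.eventually (eventually_lt_nhds hρ)
      have e2 : ∀ᶠ j in atTop, 2 * T j * ‖w‖ + ‖Z j - zb‖ < ρ :=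
        hcomb.eventually (eventually_lt_nhds hρ)
      filter_upwards [e1, e2] with j h1 h2
      exact ⟨h1.le, h2⟩
    obtain ⟨J, hJ⟩ := eventually_atTop.mp hev
    have hZC : ∀ j : ℕ, Z (j + J) ∈ C := by
      intro j
      refine ⟨hZΩ _, ?_⟩
      rw [mem_closedBall, dist_eq_norm]
      exact (hJ (j + J) (Nat.le_add_left J j)).1
    have hprox : ∀ j : ℕ, ∃ s ∈ Set.Ioc (0:ℝ) (T (j + J)), ∃ p ∈ C,
        dist (Z (j + J) + s • w) p = infDist (Z (j + J) + s • w) C ∧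
        0 < dist (Z (j + J) + s • w) p ∧
        (ε / 2) * dist (Z (j + J) + s • w) p ≤ ⟪Z (j + J) + s • w - p, w⟫ :=
      fun j => exists_prox_dir hC hCne (hZC j) (hTpos _) hε (hfar _)
    choose s hs p hpC hpd hppos hpiw using hprox
    set v : ℕ → Euc n := fun j => Z (j + J) + s j • w - p j with hvdef
    have hvnorm : ∀ j, ‖v j‖ = dist (Z (j + J) + s j • w) (p j) := by
      intro j; rw [dist_eq_norm]
    have hvpos : ∀ j, 0 < ‖v j‖ := fun j => by rw [hvnorm j]; exact hppos j
    -- bound: ‖v j‖ ≤ s j * ‖w‖ and p j → zb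
    have hvle : ∀ j, ‖v j‖ ≤ s j * ‖w‖ := by
      intro j
      rw [hvnorm j, hpd j]
      calc infDist (Z (j + J) + s j • w) C ≤ dist (Z (j + J) + s j • w) (Z (j + J)) :=
            infDist_le_dist_of_mem (hZC j)
      _ = s j * ‖w‖ := by
            rw [dist_eq_norm, add_sub_cancel_left, norm_smul, Real.norm_eq_abs,
              abs_of_pos (hs j).1]
    have hpnear : ∀ j, ‖p j - zb‖ ≤ 2 * T (j + J) * ‖w‖ + ‖Z (j + J) - zb‖ := by
      intro j
      have h1 : ‖p j - zb‖ ≤ ‖p j - (Z (j + J) + s j • w)‖ + ‖(Z (j + J) + s j • w) - zb‖ := by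
        have := norm_add_le (p j - (Z (j + J) + s j • w)) ((Z (j + J) + s j • w) - zb)
        simpa using this
      have h2 : ‖p j - (Z (j + J) + s j • w)‖ = ‖v j‖ := by
        rw [hvdef, ← norm_neg]; congr 1; abel
      have h3 : ‖(Z (j + J) + s j • w) - zb‖ ≤ s j * ‖w‖ + ‖Z (j + J) - zb‖ := by
        have h4 : (Z (j + J) + s j • w) - zb = s j • w + (Z (j + J) - zb) := by abel
        rw [h4]
        calc ‖s j • w + (Z (j + J) - zb)‖ ≤ ‖s j • w‖ + ‖Z (j + J) - zb‖ := norm_add_le _ _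
        _ = s j * ‖w‖ + ‖Z (j + J) - zb‖ := by
              rw [norm_smul, Real.norm_eq_abs, abs_of_pos (hs j).1]
      have h5 : s j * ‖w‖ ≤ T (j + J) * ‖w‖ :=
        mul_le_mul_of_nonneg_right (hs j).2 (norm_nonneg w)
      have h6 := hvle j
      rw [h2] at h1
      linarith
    have hpball : ∀ j, dist (p j) zb < ρ := by
      intro j
      rw [dist_eq_norm]
      exact lt_of_le_of_lt (hpnear j) (hJ (j + J) (Nat.le_add_left J j)).2
    -- regular normals
    have hvreg : ∀ j, v j ∈ regNormal Ω (p j) := by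
      intro j
      have hnear : ∀ q ∈ Ω ∩ closedBall zb ρ, dist (Z (j + J) + s j • w) (p j)
          ≤ dist (Z (j + J) + s j • w) q := by
        intro q hq
        rw [hpd j]
        exact infDist_le_dist_of_mem hq
      exact prox_normal_mem_regNormal (hpball j) hnear
    set u : ℕ → Euc n := fun j => ‖v j‖⁻¹ • v j with hudef
    have hureg : ∀ j, u j ∈ regNormal Ω (p j) :=
      fun j => smul_mem_regNormal (inv_nonneg.mpr (hvpos j).le) (hvreg j)
    have husph : ∀ j, u j ∈ sphere (0 : Euc n) 1 := by
      intro j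
      rw [mem_sphere_zero_iff_norm, hudef]
      rw [norm_smul, Real.norm_eq_abs, abs_inv, abs_of_pos (hvpos j)]
      exact inv_mul_cancel₀ (hvpos j).ne'
    have huiw : ∀ j, ε / 2 ≤ ⟪u j, w⟫ := by
      intro j
      have h1 := hpiw j
      rw [← hvnorm j] at h1
      have h1' : ε / 2 * ‖v j‖ ≤ ⟪v j, w⟫ := h1
      have h2 : ⟪u j, w⟫ = ‖v j‖⁻¹ * ⟪v j, w⟫ := by
        rw [hudef, real_inner_smul_left]
      rw [h2]
      rw [← sub_nonneg]
      have h3 : ‖v j‖⁻¹ * (⟪v j, w⟫ - ε / 2 * ‖v j‖) = ‖v j‖⁻¹ * ⟪v j, w⟫ - ε / 2 := by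
        rw [mul_sub]
        congr 1
        rw [mul_comm (ε / 2) ‖v j‖, ← mul_assoc, inv_mul_cancel₀ (hvpos j).ne', one_mul]
      rw [← h3]
      exact mul_nonneg (inv_nonneg.mpr (hvpos j).le) (by linarith [h1'])
    -- p j → zb
    have hpt : Tendsto p atTop (𝓝 zb) := by
      rw [tendsto_iff_norm_sub_tendsto_zero]
      have hcomb2 : Tendsto (fun j => 2 * T (j + J) * ‖w‖ + ‖Z (j + J) - zb‖) atTop (𝓝 0) :=
        hcomb.comp (tendsto_add_atTop_nat J)
      exact squeeze_zero (fun j => norm_nonneg _) hpnear hcomb2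
    obtain ⟨ub, hubs, ψ, hψ, hconv⟩ := (isCompact_sphere (0 : Euc n) 1).tendsto_subseq husph
    have hub : ub ∈ limNormal Ω zb := by
      refine ⟨fun j => p (ψ j), fun j => u (ψ j), fun j => (hpC (ψ j)).1,
        hpt.comp hψ.tendsto_atTop, fun j => hureg (ψ j), hconv⟩
    have hle := hw ub hub
    have hlim : Tendsto (fun j => ⟪u (ψ j), w⟫) atTop (𝓝 ⟪ub, w⟫) :=
      hconv.inner (tendsto_const_nhds : Tendsto (fun _ : ℕ => w) atTop (𝓝 w))
    have : ε / 2 ≤ ⟪ub, w⟫ :=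
      le_of_tendsto_of_tendsto tendsto_const_nhds hlim
        (Filter.Eventually.of_forall fun j => huiw (ψ j))
    linarith
  -- construct wk from the distance estimate
  choose q hqC hqd using fun k => hC.exists_infDist_eq_dist hCne (zk k + t k • w)
  refine ⟨fun k => (t k)⁻¹ • (q k - zk k), ?_, ?_⟩
  · rw [tendsto_iff_norm_sub_tendsto_zero]
    have heq : ∀ k, ‖(t k)⁻¹ • (q k - zk k) - w‖ = infDist (zk k + t k • w) C / t k := by
      intro k
      have hne : t k ≠ 0 := (htp k).ne'
      have h1 : (t k)⁻¹ • (q k - zk k) - w = (t k)⁻¹ • (q k - (zk k + t k • w)) := by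
        rw [smul_sub, smul_sub]
        rw [smul_add (t k)⁻¹ (zk k) (t k • w), inv_smul_smul₀ hne]
        abel
      rw [h1, norm_smul, Real.norm_eq_abs, abs_inv, abs_of_pos (htp k)]
      rw [hqd k, dist_eq_norm, ← norm_neg]
      rw [div_eq_inv_mul]
      congr 2
      abel
    exact Tendsto.congr (fun k => (heq k).symm) main
  · intro k
    have h1 : zk k + t k • ((t k)⁻¹ • (q k - zk k)) = q k := by
      rw [smul_inv_smul₀ (htp k).ne']
      abel
    rw [h1]
    exact (hqC k).1

end AuxProofs5
section AuxProofs6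

variable {n : ℕ}

lemma regNormal_subset_limNormal {Ω : Set (Euc n)} {zb : Euc n} (hz : zb ∈ Ω) :
    regNormal Ω zb ⊆ limNormal Ω zb := fun v hv =>
  ⟨fun _ => zb, fun _ => v, fun _ => hz, tendsto_const_nhds, fun _ => hv, tendsto_const_nhds⟩

lemma orthSet_paraCone_subset_limNormal {Ω : Set (Euc n)} {zb : Euc n} (hz : zb ∈ Ω) :
    orthSet (paraCone Ω zb) ⊆ limNormal Ω zb := by
  intro v hv
  apply regNormal_subset_limNormal hz
  intro u hu
  exact le_of_eq (hv u (tanCone_subset_paraCone hz hu))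

lemma limNormal_subset_orthSet {Ω : Set (Euc n)} {zb : Euc n}
    (hss : StrictlySmoothAt Ω zb) :
    limNormal Ω zb ⊆ orthSet (paraCone Ω zb) := by
  intro v hv w hw
  have h1 : ⟪v, w⟫ ≤ 0 := limNormal_inner_le hv (by rw [StrictlySmoothAt] at hss; rw [hss]; exact hw)
  have h2 : ⟪v, -w⟫ ≤ 0 := limNormal_inner_le hv
    (by rw [StrictlySmoothAt] at hss; rw [hss]; exact neg_mem_paraCone hw)
  rw [inner_neg_right] at h2
  linarith

lemma orth_eq_limNormal_of_ss {Ω : Set (Euc n)} {zb : Euc n} (hz : zb ∈ Ω)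
    (hss : StrictlySmoothAt Ω zb) :
    orthSet (paraCone Ω zb) = limNormal Ω zb :=
  Set.Subset.antisymm (orthSet_paraCone_subset_limNormal hz) (limNormal_subset_orthSet hss)

lemma isLinearSubspace_paraCone_of_ss {Ω : Set (Euc n)} {zb : Euc n}
    (hss : StrictlySmoothAt Ω zb) : IsLinearSubspace (paraCone Ω zb) := by
  rw [StrictlySmoothAt] at hss
  have hneg : ∀ w ∈ clarkeCone Ω zb, -w ∈ clarkeCone Ω zb := by
    intro w hw
    rw [hss] at hw ⊢
    exact neg_mem_paraCone hw
  rw [← hss]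
  refine ⟨{ carrier := clarkeCone Ω zb, add_mem' := ?_, zero_mem' := ?_, smul_mem' := ?_ }, rfl⟩
  · intro a b ha hb
    exact add_mem_clarkeCone ha hb
  · exact zero_mem_clarkeCone Ω zb
  · intro c a ha
    rcases lt_trichotomy c 0 with hc | hc | hc
    · have h1 : (-c) • (-a) ∈ clarkeCone Ω zb :=
        smul_mem_clarkeCone (by linarith) (hneg a ha)
      have h2 : (-c) • (-a) = c • a := by rw [neg_smul, smul_neg, neg_neg]
      rw [h2] at h1
      exact h1
    · rw [hc, zero_smul]
      exact zero_mem_clarkeCone Ω zb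
    · exact smul_mem_clarkeCone hc ha

lemma clarkeCone_subset_paraCone {Ω : Set (Euc n)} {zb : Euc n} (hz : zb ∈ Ω) :
    clarkeCone Ω zb ⊆ paraCone Ω zb :=
  fun _ hw => tanCone_subset_paraCone hz (clarkeCone_subset_tanCone hz hw)

lemma ss_of_orth_eq {Ω : Set (Euc n)} {zb : Euc n} (hz : zb ∈ Ω)
    (hloc : LocallyClosedAt Ω zb)
    (horth : orthSet (paraCone Ω zb) = limNormal Ω zb) : StrictlySmoothAt Ω zb := by
  rw [StrictlySmoothAt]
  apply Set.Subset.antisymm (clarkeCone_subset_paraCone hz)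
  intro w hw
  apply polar_limNormal_subset_clarke hz hloc
  intro v hv
  rw [← horth] at hv
  exact le_of_eq (hv w hw)

end AuxProofs6
/-- Lemma 2.2: characterization of strict smoothness via the
paratingent cone and the limiting normal cone. -/
theorem stmt_1 {n : ℕ} (Ω : Set (Euc n)) (zb : Euc n) (hz : zb ∈ Ω)
    (hloc : LocallyClosedAt Ω zb) :
    (StrictlySmoothAt Ω zb ↔
      (IsLinearSubspace (paraCone Ω zb) ∧ IsLinearSubspace (limNormal Ω zb) ∧
        orthSet (paraCone Ω zb) = limNormal Ω zb)) ∧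
    (StrictlySmoothAt Ω zb → NormallyRegularAt Ω zb) := by
  constructor
  · constructor
    · intro hss
      refine ⟨isLinearSubspace_paraCone_of_ss hss, ?_, orth_eq_limNormal_of_ss hz hss⟩
      rw [← orth_eq_limNormal_of_ss hz hss]
      exact isLinearSubspace_orthSet _
    · rintro ⟨-, -, horth⟩
      exact ss_of_orth_eq hz hloc horth
  · intro hss
    rw [NormallyRegularAt]
    apply Set.Subset.antisymm (regNormal_subset_limNormal hz)
    intro v hv
    have hv2 := limNormal_subset_orthSet hss hv
    intro u hu
    exact le_of_eq (hv2 u (tanCone_subset_paraCone hz hu))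
end
end
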